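/- arXiv:1411.4452 — 3 statements merged into one kernel-verified Lean document; each statement's English description precedes it below -/
import Mathlib

section
/- Let (R, M) be a Noetherian local ring whose associated graded ring gr_M(R) is a domain, J ⊆ R an ideal, and φ ∈ R a nonzero element. Then the initial ideal of the product ideal J·⟨φ⟩ satisfies In_M(J·⟨φ⟩) = in_M(φ) · In_M(J) in gr_M(R). -/
/-- The `M`-adic order of an element: `ord_M(h) = sup { m : h ∈ M^m }`. -/
noncomputable def mAdicOrder {R : Type*} [CommRing R] (M : Ideal R) (h : R) : ℕ :=
  sSup {m : ℕ | h ∈ M ^ m}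

lemma mAdicOrder_spec {R : Type*} [CommRing R] [IsNoetherianRing R] [IsLocalRing R]
    (M : Ideal R) (hM : M = IsLocalRing.maximalIdeal R) (h : R) (hh : h ≠ 0) :
    h ∈ M ^ (mAdicOrder M h) ∧ h ∉ M ^ (mAdicOrder M h + 1) := by
  have hbot : (⨅ n : ℕ, M ^ n) = ⊥ := by
    subst hM
    exact Ideal.iInf_pow_eq_bot_of_isLocalRing _ (IsLocalRing.maximalIdeal.isMaximal R).ne_top
  have hbd : BddAbove {m : ℕ | h ∈ M ^ m} := by
    by_contra hc
    apply hh
    have : ∀ n : ℕ, h ∈ M ^ n := by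
      intro n
      obtain ⟨m, hm, hnm⟩ := not_bddAbove_iff.mp hc n
      exact Ideal.pow_le_pow_right hnm.le hm
    have : h ∈ (⨅ n : ℕ, M ^ n) := Submodule.mem_iInf _ |>.mpr this
    rwa [hbot] at this
  have hne : {m : ℕ | h ∈ M ^ m}.Nonempty := ⟨0, by simp⟩
  constructor
  · exact Nat.sSup_mem hne hbd
  · intro hc
    have : mAdicOrder M h + 1 ≤ sSup {m : ℕ | h ∈ M ^ m} :=
      le_csSup hbd (show mAdicOrder M h + 1 ∈ {m : ℕ | h ∈ M ^ m} from hc)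
    simp only [mAdicOrder] at this
    omega

/-- Let `(R, M)` be a Noetherian local ring whose associated graded ring `gr_M(R)` is a
domain (expressed equivalently via homogeneous elements: if `a ∈ M^m \ M^{m+1}` and
`b ∈ M^n \ M^{n+1}` then `a*b ∉ M^{m+n+1}`), `J ⊆ R` an ideal and `φ ∈ R` nonzero of
order `μ`.  Then `In_M(J·⟨φ⟩) = in_M(φ) · In_M(J)` in `gr_M(R)`.  Since the degree-`d`
component of the initial ideal `In_M(I)` is the image of `I ∩ M^d` in `M^d/M^{d+1}`, and
multiplication by `in_M(φ)` is induced by multiplication by `φ`, this equality of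
homogeneous ideals is expressed degreewise in `R` as:
`((J·⟨φ⟩) ∩ M^{n+μ}) + M^{n+μ+1} = φ·(J ∩ M^n) + M^{n+μ+1}` for all `n`. -/
theorem stmt2 {R : Type*} [CommRing R] [IsNoetherianRing R] [IsLocalRing R]
    (M : Ideal R) (hM : M = IsLocalRing.maximalIdeal R)
    (hgr : ∀ (a b : R) (m n : ℕ), a ∈ M ^ m → a ∉ M ^ (m + 1) →
      b ∈ M ^ n → b ∉ M ^ (n + 1) → a * b ∉ M ^ (m + n + 1))
    (J : Ideal R) (φ : R) (hφ : φ ≠ 0) (μ : ℕ) (hμ : μ = mAdicOrder M φ) :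
    ∀ n : ℕ,
      ((J * Ideal.span {φ}) ⊓ M ^ (n + μ) : Submodule R R) ⊔ M ^ (n + μ + 1)
        = Submodule.map (LinearMap.mulLeft R φ) ((J ⊓ M ^ n : Submodule R R))
            ⊔ M ^ (n + μ + 1) := by
  intro n
  obtain ⟨hφμ, hφμ1⟩ : φ ∈ M ^ μ ∧ φ ∉ M ^ (μ + 1) := hμ ▸ mAdicOrder_spec M hM φ hφ
  apply le_antisymm
  · apply sup_le _ le_sup_right
    rintro x ⟨hx1, hx2⟩
    obtain ⟨j, hj, rfl⟩ := Ideal.mem_mul_span_singleton.mp hx1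
    -- show j ∈ M ^ n
    have hjn : j ∈ M ^ n := by
      by_contra hjn
      have hj0 : j ≠ 0 := by rintro rfl; exact hjn (zero_mem _)
      obtain ⟨hjk, hjk1⟩ := mAdicOrder_spec M hM j hj0
      set k := mAdicOrder M j with hk
      have hkn : k + 1 ≤ n := by
        by_contra hc
        exact hjn (Ideal.pow_le_pow_right (by omega) hjk)
      have : j * φ ∉ M ^ (k + μ + 1) := hgr j φ k μ hjk hjk1 hφμ hφμ1
      exact this (Ideal.pow_le_pow_right (by omega) hx2)
    exact le_sup_left (α := Submodule R R)
      ⟨j, ⟨hj, hjn⟩, by simp [LinearMap.mulLeft, mul_comm]⟩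
  · apply sup_le _ le_sup_right
    rintro x ⟨j, ⟨hj1, hj2⟩, rfl⟩
    apply le_sup_left (α := Submodule R R)
    refine ⟨Ideal.mem_mul_span_singleton.mpr ⟨j, hj1, by simp [LinearMap.mulLeft, mul_comm]⟩, ?_⟩
    have : φ * j ∈ M ^ μ * M ^ n := Ideal.mul_mem_mul hφμ hj2
    simpa [LinearMap.mulLeft, ← pow_add, add_comm μ n] using this
end

section
/- Fix integers N ≥ 1 and e ≥ 1. Let S ⊆ ℝ_{≥0}^e be a finite nonempty set such that every s ∈ S has the form A/d for some A ∈ ℤ_{≥0}^e and some integer d with 1 ≤ d ≤ N. Then δ := inf{ v₁ + ⋯ + v_e : v ∈ conv(S) + ℝ_{≥0}^e } belongs to (1/N!)·ℤ_{≥0}. -/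
open Pointwise

/-- Fix `N ≥ 1`, `e ≥ 1`.  If every point of the finite nonempty set `S ⊆ ℝ_{≥0}^e` has
the form `A/d` with `A ∈ ℤ_{≥0}^e` and `1 ≤ d ≤ N`, then
`δ = inf { v₁ + ⋯ + v_e : v ∈ conv(S) + ℝ_{≥0}^e }` belongs to `(1/N!)·ℤ_{≥0}`. -/
theorem stmt6 {e N : ℕ} (he : 1 ≤ e) (hN : 1 ≤ N)
    (S : Set (Fin e → ℝ)) (hS : S.Finite) (hne : S.Nonempty)
    (hform : ∀ s ∈ S, ∃ (A : Fin e → ℕ) (d : ℕ), 1 ≤ d ∧ d ≤ N ∧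
      ∀ i, s i = (A i : ℝ) / (d : ℝ)) :
    ∃ m : ℕ,
      sInf ((fun v : Fin e → ℝ => ∑ i, v i) ''
          (convexHull ℝ S + {w : Fin e → ℝ | ∀ i, 0 ≤ w i}))
        = (m : ℝ) / (N.factorial : ℝ) := by
  set f : (Fin e → ℝ) → ℝ := fun v => ∑ i, v i with hf
  have hlin : IsLinearMap ℝ f := by
    constructor
    · intro x y; simp [hf, Finset.sum_add_distrib]
    · intro c x; simp [hf, Finset.mul_sum]
  obtain ⟨s₀, hs₀S, hs₀min⟩ := Set.exists_min_image S f hS hne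
  -- the inf equals f s₀
  have hmem : f s₀ ∈ (f '' (convexHull ℝ S + {w : Fin e → ℝ | ∀ i, 0 ≤ w i})) := by
    refine ⟨s₀, ?_, rfl⟩
    have : s₀ = s₀ + 0 := by simp
    rw [this]
    exact Set.add_mem_add (subset_convexHull ℝ S hs₀S) (fun i => le_refl 0)
  have hlb : ∀ x ∈ (f '' (convexHull ℝ S + {w : Fin e → ℝ | ∀ i, 0 ≤ w i})), f s₀ ≤ x := by
    rintro x ⟨u, ⟨a, ha, b, hb, rfl⟩, rfl⟩
    have hconv : convexHull ℝ S ⊆ {v | f s₀ ≤ f v} := by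
      apply convexHull_min (fun s hs => hs₀min s hs)
      exact convex_halfSpace_ge hlin (f s₀)
    have h1 : f s₀ ≤ f a := hconv ha
    have h2 : 0 ≤ f b := Finset.sum_nonneg fun i _ => hb i
    have : f (a + b) = f a + f b := hlin.map_add a b
    rw [this]; linarith
  have hinf : sInf (f '' (convexHull ℝ S + {w : Fin e → ℝ | ∀ i, 0 ≤ w i})) = f s₀ :=
    le_antisymm (csInf_le ⟨f s₀, hlb⟩ hmem) (le_csInf ⟨f s₀, hmem⟩ hlb)
  obtain ⟨A, d, hd1, hdN, hA⟩ := hform s₀ hs₀S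
  have hdvd : d ∣ N.factorial := Nat.dvd_factorial hd1 hdN
  refine ⟨(∑ i, A i) * (N.factorial / d), ?_⟩
  rw [hinf]
  have hd0 : (d : ℝ) ≠ 0 := Nat.cast_ne_zero.mpr (by omega)
  have hN0 : (N.factorial : ℝ) ≠ 0 := Nat.cast_ne_zero.mpr N.factorial_ne_zero
  have hfs : f s₀ = (∑ i, (A i : ℝ)) / d := by
    simp only [hf]
    rw [Finset.sum_div]
    exact Finset.sum_congr rfl fun i _ => hA i
  rw [hfs, div_eq_div_iff hd0 hN0]
  have : (∑ i, A i) * (N.factorial / d) * d = (∑ i, A i) * N.factorial := by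
    rw [mul_assoc, Nat.div_mul_cancel hdvd]
  exact_mod_cast this.symm
end

section
/- Let S ⊆ ℝ_{≥0}^2 be a finite nonempty set with s₁ + s₂ ≥ 1 for every s ∈ S, and let Δ = conv(S) + ℝ_{≥0}^2. Define T(v₁, v₂) = (v₁, v₁ + v₂ - 1) and Δ' = conv(T(S)) + ℝ_{≥0}^2. Then α₁(Δ') = α₁(Δ) and β₁(Δ') = α₁(Δ) + β₁(Δ) - 1. In particular, if α₁(Δ) < 1 then β₁(Δ') < β₁(Δ). -/
open Pointwise

/-- `α₁(Δ) = inf { v₁ : (v₁, v₂) ∈ Δ }`. -/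
noncomputable def alpha1 (Δ : Set (ℝ × ℝ)) : ℝ := sInf (Prod.fst '' Δ)

/-- `β₁(Δ) = inf { v₂ : (α₁(Δ), v₂) ∈ Δ }`. -/
noncomputable def beta1 (Δ : Set (ℝ × ℝ)) : ℝ := sInf {y : ℝ | (alpha1 Δ, y) ∈ Δ}

lemma key_alpha_beta (S : Set (ℝ × ℝ)) (Δ : Set (ℝ × ℝ))
    (hΔ : Δ = convexHull ℝ S + {w : ℝ × ℝ | 0 ≤ w.1 ∧ 0 ≤ w.2})
    (a b : ℝ) (hab : (a, b) ∈ S)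
    (ha : ∀ s ∈ S, a ≤ s.1) (hb : ∀ s ∈ S, s.1 = a → b ≤ s.2) :
    alpha1 Δ = a ∧ beta1 Δ = b := by
  set C : Set (ℝ × ℝ) := {v : ℝ × ℝ | a ≤ v.1 ∧ (v.1 = a → b ≤ v.2)} with hC
  have hCconv : Convex ℝ C := by
    rintro x ⟨hx1, hx2⟩ y ⟨hy1, hy2⟩ p q hp hq hpq
    have hfst : (p • x + q • y).1 = p * x.1 + q * y.1 := by
      simp [Prod.smul_fst, smul_eq_mul]
    have hsnd : (p • x + q • y).2 = p * x.2 + q * y.2 := by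
      simp [Prod.smul_snd, smul_eq_mul]
    have keya : p * a + q * a = a := by rw [← add_mul, hpq, one_mul]
    have keyb : p * b + q * b = b := by rw [← add_mul, hpq, one_mul]
    have hpa := mul_le_mul_of_nonneg_left hx1 hp
    have hqa := mul_le_mul_of_nonneg_left hy1 hq
    constructor
    · rw [hfst]; linarith
    · intro h1
      rw [hfst] at h1
      rw [hsnd]
      have hpx : p * (x.1 - a) = 0 ∧ q * (y.1 - a) = 0 := by
        have hs1 : p * (x.1 - a) + q * (y.1 - a) = 0 := by
          rw [mul_sub, mul_sub]; linarith
        have hn1 : 0 ≤ p * (x.1 - a) := mul_nonneg hp (sub_nonneg.mpr hx1)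
        have hn2 : 0 ≤ q * (y.1 - a) := mul_nonneg hq (sub_nonneg.mpr hy1)
        constructor <;> linarith
      have h2 : p * b ≤ p * x.2 := by
        rcases hp.eq_or_lt with rfl | hp'
        · simp
        · have hx1a : x.1 = a := by
            have := hpx.1
            have : x.1 - a = 0 := by
              by_contra hne
              exact hne (by nlinarith [mul_eq_zero.mp this])
            linarith
          exact mul_le_mul_of_nonneg_left (hx2 hx1a) hp
      have h3 : q * b ≤ q * y.2 := by
        rcases hq.eq_or_lt with rfl | hq'
        · simp
        · have hy1a : y.1 = a := by
            have := hpx.2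
            have : y.1 - a = 0 := by
              by_contra hne
              exact hne (by nlinarith [mul_eq_zero.mp this])
            linarith
          exact mul_le_mul_of_nonneg_left (hy2 hy1a) hq
      linarith
  have hSC : S ⊆ C := by
    intro s hs
    exact ⟨ha s hs, hb s hs⟩
  have hconvC : convexHull ℝ S ⊆ C := convexHull_min hSC hCconv
  have hmem : ((a, b) : ℝ × ℝ) ∈ Δ := by
    rw [hΔ, Set.mem_add]
    exact ⟨(a, b), subset_convexHull ℝ S hab, 0, ⟨le_refl 0, le_refl 0⟩, by simp⟩
  have halpha : IsLeast (Prod.fst '' Δ) a := by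
    constructor
    · exact ⟨(a, b), hmem, rfl⟩
    · rintro x ⟨v, hv, rfl⟩
      rw [hΔ, Set.mem_add] at hv
      obtain ⟨c, hc, w, hw, hcw⟩ := hv
      have hc1 : a ≤ c.1 := (hconvC hc).1
      have : v.1 = c.1 + w.1 := by rw [← hcw]; rfl
      rw [this]
      linarith [hw.1]
  have hA : alpha1 Δ = a := halpha.csInf_eq
  refine ⟨hA, ?_⟩
  have hbeta : IsLeast {y : ℝ | ((a : ℝ), y) ∈ Δ} b := by
    constructor
    · exact hmem
    · intro y hy
      rw [Set.mem_setOf_eq, hΔ, Set.mem_add] at hy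
      obtain ⟨c, hc, w, hw, hcw⟩ := hy
      have h1 : c.1 + w.1 = a := by
        have := congrArg Prod.fst hcw; simpa using this
      have h2 : c.2 + w.2 = y := by
        have := congrArg Prod.snd hcw; simpa using this
      have hc1 : a ≤ c.1 := (hconvC hc).1
      have hc1a : c.1 = a := by linarith [hw.1]
      have := (hconvC hc).2 hc1a
      linarith [hw.2]
  have : beta1 Δ = sInf {y : ℝ | ((a : ℝ), y) ∈ Δ} := by
    rw [beta1, hA]
  rw [this, hbeta.csInf_eq]

/-- Let `S ⊆ ℝ_{≥0}²` be finite nonempty with `s₁ + s₂ ≥ 1` for all `s ∈ S`, and let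
`Δ = conv(S) + ℝ_{≥0}²`.  With `T(v₁, v₂) = (v₁, v₁ + v₂ - 1)` and
`Δ' = conv(T(S)) + ℝ_{≥0}²`, one has `α₁(Δ') = α₁(Δ)` and
`β₁(Δ') = α₁(Δ) + β₁(Δ) - 1`; in particular, if `α₁(Δ) < 1` then `β₁(Δ') < β₁(Δ)`. -/
theorem stmt9 (S : Set (ℝ × ℝ)) (hS : S.Finite) (hne : S.Nonempty)
    (hS0 : ∀ s ∈ S, 0 ≤ s.1 ∧ 0 ≤ s.2) (hS1 : ∀ s ∈ S, 1 ≤ s.1 + s.2)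
    (Δ Δ' : Set (ℝ × ℝ))
    (hΔ : Δ = convexHull ℝ S + {w : ℝ × ℝ | 0 ≤ w.1 ∧ 0 ≤ w.2})
    (hΔ' : Δ' = convexHull ℝ ((fun v : ℝ × ℝ => (v.1, v.1 + v.2 - 1)) '' S)
        + {w : ℝ × ℝ | 0 ≤ w.1 ∧ 0 ≤ w.2}) :
    alpha1 Δ' = alpha1 Δ ∧
    beta1 Δ' = alpha1 Δ + beta1 Δ - 1 ∧
    (alpha1 Δ < 1 → beta1 Δ' < beta1 Δ) := by
  obtain ⟨s0, hs0S, hs0min⟩ := Set.exists_min_image S Prod.fst hS hne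
  set a := s0.1 with ha_def
  have hSa_fin : ({s ∈ S | s.1 = a}).Finite := hS.subset (Set.sep_subset _ _)
  have hSa_ne : ({s ∈ S | s.1 = a}).Nonempty := ⟨s0, hs0S, rfl⟩
  obtain ⟨t0, ⟨ht0S, ht0a⟩, ht0min⟩ :=
    Set.exists_min_image {s ∈ S | s.1 = a} Prod.snd hSa_fin hSa_ne
  set b := t0.2 with hb_def
  have habS : ((a, b) : ℝ × ℝ) ∈ S := by
    have : ((a, b) : ℝ × ℝ) = t0 := by
      ext <;> simp [ht0a.symm, hb_def]
    rw [this]; exact ht0S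
  have hbmin : ∀ s ∈ S, s.1 = a → b ≤ s.2 := fun s hs hsa => ht0min s ⟨hs, hsa⟩
  have h1 := key_alpha_beta S Δ hΔ a b habS hs0min hbmin
  have h2 := key_alpha_beta ((fun v : ℝ × ℝ => (v.1, v.1 + v.2 - 1)) '' S) Δ' hΔ'
      a (a + b - 1) ?_ ?_ ?_
  · refine ⟨by rw [h1.1, h2.1], by rw [h1.2, h2.2, h1.1], ?_⟩
    intro hlt
    rw [h1.2, h2.2, h1.1] at *
    linarith
  · exact ⟨(a, b), habS, rfl⟩
  · rintro _ ⟨s, hs, rfl⟩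
    exact hs0min s hs
  · rintro _ ⟨s, hs, rfl⟩ h
    simp only at h
    have := hbmin s hs h
    simp only
    linarith
end
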